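/- For k = 4, D_min(w₁) ≥ 6(1/2 - w₁)² for all w₁ ∈ [0,1], where D_min(w₁) = w₁·ln(6(w₁ - w₂(w₁))) + (1-w₁)·ln(6(1 - w₁ - w₂(w₁))) and w₂(w₁) = (2 - √(12(w₁-1/2)² + 1))/3. -/

import Mathlib

noncomputable def w2fun (w₁ : ℝ) : ℝ := (2 - Real.sqrt (12 * (w₁ - 1 / 2) ^ 2 + 1)) / 3

noncomputable def Dmin (w₁ : ℝ) : ℝ :=
  w₁ * Real.log (6 * (w₁ - w2fun w₁)) + (1 - w₁) * Real.log (6 * (1 - w₁ - w2fun w₁))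

/-- artanh-type lower bound for `x ≥ 1`. -/
lemma log_lb_pos (v : ℝ) (h0 : 0 ≤ v) (h1 : v < 1) :
    2*(v + v^3/3 + v^5/5) ≤ Real.log ((1+v)/(1-v)) := by
  have hv2 : (0:ℝ) < 1 - v := by linarith
  set f : ℝ → ℝ := fun x => Real.log (1+x) - Real.log (1-x) - 2*(x + x^3/3 + x^5/5) with hf
  have hder : ∀ x ∈ Set.Icc (0:ℝ) v, HasDerivAt f (2*x^6/(1-x^2)) x := by
    intro x hx
    have hx1 : (0:ℝ) < 1 + x := by linarith [hx.1]
    have hx2 : (0:ℝ) < 1 - x := by linarith [hx.2, h1]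
    have d1 : HasDerivAt (fun y : ℝ => Real.log (1+y)) (1/(1+x)) x := by
      simpa using ((hasDerivAt_id x).const_add 1).log hx1.ne'
    have d2 : HasDerivAt (fun y : ℝ => Real.log (1-y)) ((-1)/(1-x)) x := by
      simpa using ((hasDerivAt_id x).const_sub 1).log hx2.ne'
    have d3 : HasDerivAt (fun y : ℝ => 2*(y + y^3/3 + y^5/5))
        (2*(1 + (3*x^2)/3 + (5*x^4)/5)) x := by
      have h3 : HasDerivAt (fun y : ℝ => y^3) (3*x^2) x := by simpa using hasDerivAt_pow 3 x
      have h5 : HasDerivAt (fun y : ℝ => y^5) (5*x^4) x := by simpa using hasDerivAt_pow 5 x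
      exact (((hasDerivAt_id x).add (h3.div_const 3)).add (h5.div_const 5)).const_mul 2
    have hcomb := (d1.sub d2).sub d3
    refine hcomb.congr_deriv ?_
    have hx12 : (1-x^2) ≠ 0 := by nlinarith
    field_simp
    ring
  have hmono : MonotoneOn f (Set.Icc (0:ℝ) v) := by
    apply monotoneOn_of_deriv_nonneg (convex_Icc 0 v)
    · intro x hx
      exact (hder x hx).continuousAt.continuousWithinAt
    · intro x hx
      rw [interior_Icc] at hx
      exact (hder x (Set.mem_Icc_of_Ioo hx)).differentiableAt.differentiableWithinAt
    · intro x hx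
      rw [interior_Icc] at hx
      rw [(hder x (Set.mem_Icc_of_Ioo hx)).deriv]
      have hx2 : (0:ℝ) < 1 - x^2 := by nlinarith [hx.1, hx.2]
      positivity
  have hf0 : f 0 = 0 := by simp [hf]
  have hfv : f 0 ≤ f v := hmono (Set.left_mem_Icc.2 h0) (Set.right_mem_Icc.2 h0) h0
  have hlog : Real.log ((1+v)/(1-v)) = Real.log (1+v) - Real.log (1-v) :=
    Real.log_div (by linarith) hv2.ne'
  rw [hlog]
  simp only [hf] at hfv hf0
  linarith

/-- artanh-type lower bound with tail, for `x ≤ 1`. -/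
lemma log_lb_neg (v : ℝ) (h0 : v ≤ 0) (h1 : -1 < v) :
    2*(v + v^3/3 + v^5/(5*(1-v^2))) ≤ Real.log ((1+v)/(1-v)) := by
  have hv1 : (0:ℝ) < 1 + v := by linarith
  set f : ℝ → ℝ := fun x => Real.log (1+x) - Real.log (1-x) - 2*(x + x^3/3 + x^5/(5*(1-x^2))) with hf
  have hder : ∀ x ∈ Set.Icc v (0:ℝ), HasDerivAt f (-(4*x^6/(5*(1-x^2)^2))) x := by
    intro x hx
    have hx1 : (0:ℝ) < 1 + x := by linarith [hx.1]
    have hx2 : (0:ℝ) < 1 - x := by linarith [hx.2]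
    have hx12 : (0:ℝ) < 1 - x^2 := by nlinarith
    have d1 : HasDerivAt (fun y : ℝ => Real.log (1+y)) (1/(1+x)) x := by
      simpa using ((hasDerivAt_id x).const_add 1).log hx1.ne'
    have d2 : HasDerivAt (fun y : ℝ => Real.log (1-y)) ((-1)/(1-x)) x := by
      simpa using ((hasDerivAt_id x).const_sub 1).log hx2.ne'
    have h3 : HasDerivAt (fun y : ℝ => y^3) (3*x^2) x := by simpa using hasDerivAt_pow 3 x
    have h5 : HasDerivAt (fun y : ℝ => y^5) (5*x^4) x := by simpa using hasDerivAt_pow 5 x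
    have hden : HasDerivAt (fun y : ℝ => 5*(1-y^2)) (5*(0-2*x)) x := by
      have h2 : HasDerivAt (fun y : ℝ => y^2) (2*x) x := by simpa using hasDerivAt_pow 2 x
      exact ((hasDerivAt_const x (1:ℝ)).sub h2).const_mul 5
    have hdenne : 5*(1-x^2) ≠ 0 := by positivity
    have d5 : HasDerivAt (fun y : ℝ => y^5/(5*(1-y^2)))
        ((5*x^4*(5*(1-x^2)) - x^5*(5*(0-2*x)))/(5*(1-x^2))^2) x := h5.div hden hdenne
    have d3 : HasDerivAt (fun y : ℝ => 2*(y + y^3/3 + y^5/(5*(1-y^2))))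
        (2*(1 + (3*x^2)/3 + (5*x^4*(5*(1-x^2)) - x^5*(5*(0-2*x)))/(5*(1-x^2))^2)) x :=
      (((hasDerivAt_id x).add (h3.div_const 3)).add d5).const_mul 2
    have hcomb := (d1.sub d2).sub d3
    refine hcomb.congr_deriv ?_
    field_simp
    ring
  have hmono : AntitoneOn f (Set.Icc v (0:ℝ)) := by
    apply antitoneOn_of_deriv_nonpos (convex_Icc v 0)
    · intro x hx
      exact (hder x hx).continuousAt.continuousWithinAt
    · intro x hx
      rw [interior_Icc] at hx
      exact (hder x (Set.mem_Icc_of_Ioo hx)).differentiableAt.differentiableWithinAt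
    · intro x hx
      rw [interior_Icc] at hx
      rw [(hder x (Set.mem_Icc_of_Ioo hx)).deriv]
      exact neg_nonpos.2 (by positivity)
  have hf0 : f 0 = 0 := by simp [hf]
  have hfv : f 0 ≤ f v := hmono (Set.left_mem_Icc.2 h0) (Set.right_mem_Icc.2 h0) h0
  have hv2 : (0:ℝ) < 1 - v := by linarith
  have hlog : Real.log ((1+v)/(1-v)) = Real.log (1+v) - Real.log (1-v) :=
    Real.log_div hv1.ne' hv2.ne'
  rw [hlog]
  simp only [hf] at hfv hf0
  linarith

set_option maxHeartbeats 1000000 in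
lemma bernA (t : ℝ) (hx : (0:ℝ) ≤ 2*t) (hy : (0:ℝ) < 1 - 2*t) :
    ((-6336) + (-147264)*t + (1404480)*t^2 + (-9774144)*t^3 + (45264960)*t^4 + (-160304832)*t^5 + (433957824)*t^6 + (-895769280)*t^7 + (1361987136)*t^8 + (-1424625408)*t^9 + (902280384)*t^10 + (-258754176)*t^11) < 0 := by
      have ha0 : (0:ℝ) < (101376)*(1-2*t)^11 := mul_pos (by norm_num) (pow_pos hy 11)
      have ha1 : (0:ℝ) ≤ (2293248)*((2*t)^1*(1-2*t)^10) := mul_nonneg (by norm_num) (mul_nonneg (pow_nonneg hx 1) (pow_nonneg hy.le 10))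
      have ha2 : (0:ℝ) ≤ (11738880)*((2*t)^2*(1-2*t)^9) := mul_nonneg (by norm_num) (mul_nonneg (pow_nonneg hx 2) (pow_nonneg hy.le 9))
      have ha3 : (0:ℝ) ≤ (38729088)*((2*t)^3*(1-2*t)^8) := mul_nonneg (by norm_num) (mul_nonneg (pow_nonneg hx 3) (pow_nonneg hy.le 8))
      have ha4 : (0:ℝ) ≤ (83703744)*((2*t)^4*(1-2*t)^7) := mul_nonneg (by norm_num) (mul_nonneg (pow_nonneg hx 4) (pow_nonneg hy.le 7))
      have ha5 : (0:ℝ) ≤ (132983712)*((2*t)^5*(1-2*t)^6) := mul_nonneg (by norm_num) (mul_nonneg (pow_nonneg hx 5) (pow_nonneg hy.le 6))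
      have ha6 : (0:ℝ) ≤ (152427024)*((2*t)^6*(1-2*t)^5) := mul_nonneg (by norm_num) (mul_nonneg (pow_nonneg hx 6) (pow_nonneg hy.le 5))
      have ha7 : (0:ℝ) ≤ (128916360)*((2*t)^7*(1-2*t)^4) := mul_nonneg (by norm_num) (mul_nonneg (pow_nonneg hx 7) (pow_nonneg hy.le 4))
      have ha8 : (0:ℝ) ≤ (77539932)*((2*t)^8*(1-2*t)^3) := mul_nonneg (by norm_num) (mul_nonneg (pow_nonneg hx 8) (pow_nonneg hy.le 3))
      have ha9 : (0:ℝ) ≤ (31499100)*((2*t)^9*(1-2*t)^2) := mul_nonneg (by norm_num) (mul_nonneg (pow_nonneg hx 9) (pow_nonneg hy.le 2))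
      have ha10 : (0:ℝ) ≤ (7786785)*((2*t)^10*(1-2*t)^1) := mul_nonneg (by norm_num) (mul_nonneg (pow_nonneg hx 10) (pow_nonneg hy.le 1))
      have ha11 : (0:ℝ) ≤ (897750)*((2*t)^11*(1-2*t)^0) := mul_nonneg (by norm_num) (mul_nonneg (pow_nonneg hx 11) (pow_nonneg hy.le 0))
      nlinarith [ha0, ha1, ha2, ha3, ha4, ha5, ha6, ha7, ha8, ha9, ha10, ha11]

set_option maxHeartbeats 1000000 in
lemma bernB (t : ℝ) (hx : (0:ℝ) ≤ 2*t) (hy : (0:ℝ) < 1 - 2*t) :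
    (0:ℝ) < ((6336) + (147264)*t + (-1442496)*t^2 + (8890560)*t^3 + (-36495936)*t^4 + (109612224)*t^5 + (-241624512)*t^6 + (382325184)*t^7 + (-408141504)*t^8 + (260464896)*t^9 + (-74696256)*t^10) := by
      have hb0 : (0:ℝ) < (101376)*(1-2*t)^10 := mul_pos (by norm_num) (pow_pos hy 10)
      have hb1 : (0:ℝ) ≤ (2191872)*((2*t)^1*(1-2*t)^9) := mul_nonneg (by norm_num) (mul_nonneg (pow_nonneg hx 1) (pow_nonneg hy.le 9))
      have hb2 : (0:ℝ) ≤ (9394944)*((2*t)^2*(1-2*t)^8) := mul_nonneg (by norm_num) (mul_nonneg (pow_nonneg hx 2) (pow_nonneg hy.le 8))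
      have hb3 : (0:ℝ) ≤ (26198400)*((2*t)^3*(1-2*t)^7) := mul_nonneg (by norm_num) (mul_nonneg (pow_nonneg hx 3) (pow_nonneg hy.le 7))
      have hb4 : (0:ℝ) ≤ (46662720)*((2*t)^4*(1-2*t)^6) := mul_nonneg (by norm_num) (mul_nonneg (pow_nonneg hx 4) (pow_nonneg hy.le 6))
      have hb5 : (0:ℝ) ≤ (60103776)*((2*t)^5*(1-2*t)^5) := mul_nonneg (by norm_num) (mul_nonneg (pow_nonneg hx 5) (pow_nonneg hy.le 5))
      have hb6 : (0:ℝ) ≤ (54356784)*((2*t)^6*(1-2*t)^4) := mul_nonneg (by norm_num) (mul_nonneg (pow_nonneg hx 6) (pow_nonneg hy.le 4))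
      have hb7 : (0:ℝ) ≤ (34655160)*((2*t)^7*(1-2*t)^3) := mul_nonneg (by norm_num) (mul_nonneg (pow_nonneg hx 7) (pow_nonneg hy.le 3))
      have hb8 : (0:ℝ) ≤ (14866332)*((2*t)^8*(1-2*t)^2) := mul_nonneg (by norm_num) (mul_nonneg (pow_nonneg hx 8) (pow_nonneg hy.le 2))
      have hb9 : (0:ℝ) ≤ (3848952)*((2*t)^9*(1-2*t)^1) := mul_nonneg (by norm_num) (mul_nonneg (pow_nonneg hx 9) (pow_nonneg hy.le 1))
      have hb10 : (0:ℝ) ≤ (448875)*((2*t)^10*(1-2*t)^0) := mul_nonneg (by norm_num) (mul_nonneg (pow_nonneg hx 10) (pow_nonneg hy.le 0))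
      nlinarith [hb0, hb1, hb2, hb3, hb4, hb5, hb6, hb7, hb8, hb9, hb10]

set_option maxHeartbeats 1000000 in
lemma bernQ (t : ℝ) (ht0 : (0:ℝ) ≤ t) (hx : (0:ℝ) ≤ 2*t) (hy : (0:ℝ) < 1 - 2*t) :
    (0:ℝ) ≤ ((6336) + (147264)*t + (-1442496)*t^2 + (8890560)*t^3 + (-36495936)*t^4 + (109612224)*t^5 + (-241624512)*t^6 + (382325184)*t^7 + (-408141504)*t^8 + (260464896)*t^9 + (-74696256)*t^10)^2*(12*t^2+1) - ((-6336) + (-147264)*t + (1404480)*t^2 + (-9774144)*t^3 + (45264960)*t^4 + (-160304832)*t^5 + (433957824)*t^6 + (-895769280)*t^7 + (1361987136)*t^8 + (-1424625408)*t^9 + (902280384)*t^10 + (-258754176)*t^11)^2 := by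
      have hq0 : (0:ℝ) ≤ (175177728)*(t^6*(2*t)^0*(1-2*t)^16) := mul_nonneg (by norm_num) (mul_nonneg (mul_nonneg (pow_nonneg ht0 6) (pow_nonneg hx 0)) (pow_nonneg hy.le 16))
      have hq1 : (0:ℝ) ≤ (6152454144)*(t^6*(2*t)^1*(1-2*t)^15) := mul_nonneg (by norm_num) (mul_nonneg (mul_nonneg (pow_nonneg ht0 6) (pow_nonneg hx 1)) (pow_nonneg hy.le 15))
      have hq2 : (0:ℝ) ≤ (77482967040)*(t^6*(2*t)^2*(1-2*t)^14) := mul_nonneg (by norm_num) (mul_nonneg (mul_nonneg (pow_nonneg ht0 6) (pow_nonneg hx 2)) (pow_nonneg hy.le 14))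
      have hq3 : (0:ℝ) ≤ (498068434944)*(t^6*(2*t)^3*(1-2*t)^13) := mul_nonneg (by norm_num) (mul_nonneg (mul_nonneg (pow_nonneg ht0 6) (pow_nonneg hx 3)) (pow_nonneg hy.le 13))
      have hq4 : (0:ℝ) ≤ (1954070562816)*(t^6*(2*t)^4*(1-2*t)^12) := mul_nonneg (by norm_num) (mul_nonneg (mul_nonneg (pow_nonneg ht0 6) (pow_nonneg hx 4)) (pow_nonneg hy.le 12))
      have hq5 : (0:ℝ) ≤ (5268943613952)*(t^6*(2*t)^5*(1-2*t)^11) := mul_nonneg (by norm_num) (mul_nonneg (mul_nonneg (pow_nonneg ht0 6) (pow_nonneg hx 5)) (pow_nonneg hy.le 11))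
      have hq6 : (0:ℝ) ≤ (10887897678336)*(t^6*(2*t)^6*(1-2*t)^10) := mul_nonneg (by norm_num) (mul_nonneg (mul_nonneg (pow_nonneg ht0 6) (pow_nonneg hx 6)) (pow_nonneg hy.le 10))
      have hq7 : (0:ℝ) ≤ (19105429450752)*(t^6*(2*t)^7*(1-2*t)^9) := mul_nonneg (by norm_num) (mul_nonneg (mul_nonneg (pow_nonneg ht0 6) (pow_nonneg hx 7)) (pow_nonneg hy.le 9))
      have hq8 : (0:ℝ) ≤ (29772138912768)*(t^6*(2*t)^8*(1-2*t)^8) := mul_nonneg (by norm_num) (mul_nonneg (mul_nonneg (pow_nonneg ht0 6) (pow_nonneg hx 8)) (pow_nonneg hy.le 8))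
      have hq9 : (0:ℝ) ≤ (39479488589376)*(t^6*(2*t)^9*(1-2*t)^7) := mul_nonneg (by norm_num) (mul_nonneg (mul_nonneg (pow_nonneg ht0 6) (pow_nonneg hx 9)) (pow_nonneg hy.le 7))
      have hq10 : (0:ℝ) ≤ (41231954291616)*(t^6*(2*t)^10*(1-2*t)^6) := mul_nonneg (by norm_num) (mul_nonneg (mul_nonneg (pow_nonneg ht0 6) (pow_nonneg hx 10)) (pow_nonneg hy.le 6))
      have hq11 : (0:ℝ) ≤ (31794342886080)*(t^6*(2*t)^11*(1-2*t)^5) := mul_nonneg (by norm_num) (mul_nonneg (mul_nonneg (pow_nonneg ht0 6) (pow_nonneg hx 11)) (pow_nonneg hy.le 5))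
      have hq12 : (0:ℝ) ≤ (17170964499888)*(t^6*(2*t)^12*(1-2*t)^4) := mul_nonneg (by norm_num) (mul_nonneg (mul_nonneg (pow_nonneg ht0 6) (pow_nonneg hx 12)) (pow_nonneg hy.le 4))
      have hq13 : (0:ℝ) ≤ (6102718950060)*(t^6*(2*t)^13*(1-2*t)^3) := mul_nonneg (by norm_num) (mul_nonneg (mul_nonneg (pow_nonneg ht0 6) (pow_nonneg hx 13)) (pow_nonneg hy.le 3))
      have hq14 : (0:ℝ) ≤ (1282175800308)*(t^6*(2*t)^14*(1-2*t)^2) := mul_nonneg (by norm_num) (mul_nonneg (mul_nonneg (pow_nonneg ht0 6) (pow_nonneg hx 14)) (pow_nonneg hy.le 2))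
      have hq15 : (0:ℝ) ≤ (121695847875)*(t^6*(2*t)^15*(1-2*t)^1) := mul_nonneg (by norm_num) (mul_nonneg (mul_nonneg (pow_nonneg ht0 6) (pow_nonneg hx 15)) (pow_nonneg hy.le 1))
      nlinarith [hq0, hq1, hq2, hq3, hq4, hq5, hq6, hq7, hq8, hq9, hq10, hq11, hq12, hq13, hq14, hq15]

set_option maxHeartbeats 1000000 in
lemma bernAB (t s : ℝ) (ht0 : (0:ℝ) ≤ t) (ht2 : t < 1/2)
    (hs2 : s^2 = 12*t^2 + 1) (hs0 : 0 < s) :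
    (0:ℝ) ≤ ((-6336) + (-147264)*t + (1404480)*t^2 + (-9774144)*t^3 + (45264960)*t^4 + (-160304832)*t^5 + (433957824)*t^6 + (-895769280)*t^7 + (1361987136)*t^8 + (-1424625408)*t^9 + (902280384)*t^10 + (-258754176)*t^11) + ((6336) + (147264)*t + (-1442496)*t^2 + (8890560)*t^3 + (-36495936)*t^4 + (109612224)*t^5 + (-241624512)*t^6 + (382325184)*t^7 + (-408141504)*t^8 + (260464896)*t^9 + (-74696256)*t^10)*s := by
  have hx : (0:ℝ) ≤ 2*t := by linarith
  have hy : (0:ℝ) < 1 - 2*t := by linarith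
  have hA := bernA t hx hy
  have hB := bernB t hx hy
  have hQ := bernQ t ht0 hx hy
  have hQ' : (0:ℝ) ≤ ((6336) + (147264)*t + (-1442496)*t^2 + (8890560)*t^3 + (-36495936)*t^4 + (109612224)*t^5 + (-241624512)*t^6 + (382325184)*t^7 + (-408141504)*t^8 + (260464896)*t^9 + (-74696256)*t^10)^2*s^2 - ((-6336) + (-147264)*t + (1404480)*t^2 + (-9774144)*t^3 + (45264960)*t^4 + (-160304832)*t^5 + (433957824)*t^6 + (-895769280)*t^7 + (1361987136)*t^8 + (-1424625408)*t^9 + (902280384)*t^10 + (-258754176)*t^11)^2 := by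
    rw [hs2]; exact hQ
  nlinarith [hQ', mul_pos hB hs0, hA]

set_option maxHeartbeats 1000000 in
lemma npoly_id (t s : ℝ) (hs2 : s^2 = 12*t^2 + 1) :
    ((2246)*s^5 + (-4990)*s^6 + (3900)*s^7 + (-1340)*s^8 + (190)*s^9 + (-6)*s^10 + (-2592)*t + (16848)*t*s + (-51840)*t*s^2 + (95568)*t*s^3 + (-91398)*t*s^4 + (37650)*t*s^5 + (-2208)*t*s^6 + (-2700)*t*s^7 + (762)*t*s^8 + (-102)*t*s^9 + (12)*t*s^10 + (38880)*t^2 + (-239760)*t^2*s + (654480)*t^2*s^2 + (-948420)*t^2*s^3 + (810720)*t^2*s^4 + (-429300)*t^2*s^5 + (141480)*t^2*s^6 + (-28260)*t^2*s^7 + (3240)*t^2*s^8 + (-180)*t^2*s^9 + (-272160)*t^3 + (1458000)*t^3*s + (-3294540)*t^3*s^2 + (4116420)*t^3*s^3 + (-2991600)*t^3*s^4 + (1311120)*t^3*s^5 + (-353700)*t^3*s^6 + (56700)*t^3*s^7 + (-4320)*t^3*s^8 + (1049760)*t^4 + (-4864050)*t^4*s + (9305010)*t^4*s^2 + (-9236700)*t^4*s^3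 + (5321700)*t^4*s^4 + (-1828170)*t^4*s^5 + (350730)*t^4*s^6 + (-29160)*t^4*s^7 + (-2603502)*t^5 + (9740250)*t^5*s + (-14955840)*t^5*s^2 + (11736900)*t^5*s^3 + (-4940190)*t^5*s^4 + (1062882)*t^5*s^5 + (-92340)*t^5*s^6 + (3737340)*t^6 + (-12691404)*t^6*s + (13938480)*t^6*s^2 + (-6893424)*t^6*s^3 + (1600884)*t^6*s^4 + (-142884)*t^6*s^5 + (-4723920)*t^7 + (7085880)*t^7*s + (-3936600)*t^7*s^2 + (962280)*t^7*s^3 + (-87480)*t^7*s^4) = ((-6336) + (-147264)*t + (1404480)*t^2 + (-9774144)*t^3 + (45264960)*t^4 + (-160304832)*t^5 + (433957824)*t^6 + (-895769280)*t^7 + (1361987136)*t^8 + (-1424625408)*t^9 + (902280384)*t^10 + (-258754176)*t^11) + ((6336) + (147264)*t + (-1442496)*t^2 + (8890560)*t^3 + (-36495936)*t^4 + (109612224)*t^5 + (-241624512)*t^6 + (382325184)*t^7 + (-408141504)*t^8 + (260464896)*t^9 + (-74696256)*t^10)*s := by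
  linear_combination ((-6336) + (6336)*s + (-6336)*s^2 + (6336)*s^3 + (-6336)*s^4 + (4090)*s^5 + (-1346)*s^6 + (190)*s^7 + (-6)*s^8 + (-144672)*t + (130416)*t*s + (-92832)*t*s^2 + (34848)*t*s^3 + (-1434)*t*s^4 + (-2802)*t*s^5 + (774)*t*s^6 + (-102)*t*s^7 + (12)*t*s^8 + (1441632)*t^2 + (-1278768)*t^2*s + (863184)*t^2*s^2 + (-406380)*t^2*s^3 + (128496)*t^2*s^4 + (-26160)*t^2*s^5 + (3168)*t^2*s^6 + (-180)*t^2*s^7 + (-7765920)*t^3 + (5867568)*t^3*s + (-3357396)*t^3*s^2 + (1332972)*t^3*s^3 + (-348588)*t^3*s^4 + (55476)*t^3*s^5 + (-4176)*t^3*s^6 + (26915616)*t^4 + (-16286670)*t^4*s + (7252398)*t^4*s^2 + (-2173410)*t^4*s^3 + (388746)*t^4*s^4 + (-31320)*t^4*s^5 + (-64510290)*t^5 + (29461158)*t^5*s + (-9265698)*t^5*s^2 + (1728594)*t^5*s^3 + (-142452)*t^5*s^4 + (107233092)*t^6 + (-33493068)*t^6*s + (6265836)*t^6*s^2 + (-518724)*t^6*s^3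 + (-116921880)*t^7 + (21705408)*t^7*s + (-1796904)*t^7*s^2 + (75190032)*t^8 + (-6224688)*t^8*s + (-21562848)*t^9) * hs2

set_option maxHeartbeats 2000000 in
lemma frac_eq (t s : ℝ) (hd1 : (0:ℝ) < s + 3*t) (hd2 : (0:ℝ) < 3 - s)
    (he2 : (0:ℝ) < 2 - s) :
    2*t*(2*((s + 3*t - 1)/(s + 3*t) + ((s + 3*t - 1)/(s + 3*t))^3/3
        + ((s + 3*t - 1)/(s + 3*t))^5/5))
      + (1 - 2*t)*(2*((1 - s)/(3 - s) + ((1 - s)/(3 - s))^3/3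
        + (1-s)^5/(20*(2-s)*(3-s)^3))) - 6*t^2
      = ((2246)*s^5 + (-4990)*s^6 + (3900)*s^7 + (-1340)*s^8 + (190)*s^9 + (-6)*s^10 + (-2592)*t + (16848)*t*s + (-51840)*t*s^2 + (95568)*t*s^3 + (-91398)*t*s^4 + (37650)*t*s^5 + (-2208)*t*s^6 + (-2700)*t*s^7 + (762)*t*s^8 + (-102)*t*s^9 + (12)*t*s^10 + (38880)*t^2 + (-239760)*t^2*s + (654480)*t^2*s^2 + (-948420)*t^2*s^3 + (810720)*t^2*s^4 + (-429300)*t^2*s^5 + (141480)*t^2*s^6 + (-28260)*t^2*s^7 + (3240)*t^2*s^8 + (-180)*t^2*s^9 + (-272160)*t^3 + (1458000)*t^3*s + (-3294540)*t^3*s^2 + (4116420)*t^3*s^3 + (-2991600)*t^3*s^4 + (1311120)*t^3*s^5 + (-353700)*t^3*s^6 + (56700)*t^3*s^7 + (-4320)*t^3*s^8 + (1049760)*t^4 + (-4864050)*t^4*s + (9305010)*t^4*s^2 + (-9236700)*t^4*s^3 + (5321700)*t^4*s^4 + (-1828170)*t^4*s^5 + (350730)*t^4*s^6 + (-29160)*t^4*s^7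 + (-2603502)*t^5 + (9740250)*t^5*s + (-14955840)*t^5*s^2 + (11736900)*t^5*s^3 + (-4940190)*t^5*s^4 + (1062882)*t^5*s^5 + (-92340)*t^5*s^6 + (3737340)*t^6 + (-12691404)*t^6*s + (13938480)*t^6*s^2 + (-6893424)*t^6*s^3 + (1600884)*t^6*s^4 + (-142884)*t^6*s^5 + (-4723920)*t^7 + (7085880)*t^7*s + (-3936600)*t^7*s^2 + (962280)*t^7*s^3 + (-87480)*t^7*s^4) / (60*(s+3*t)^5*(2-s)*(3-s)^3) := by
  have hD0 : (0:ℝ) < 60*(s+3*t)^5*(2-s)*(3-s)^3 := by positivity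
  rw [eq_div_iff hD0.ne']
  have h1 := hd1.ne'
  have h2 := hd2.ne'
  have h3 := he2.ne'
  generalize ha : s + 3*t = a at *
  generalize hb : 3 - s = b at *
  generalize hc : 2 - s = c at *
  field_simp
  subst ha hb hc
  ring

set_option maxHeartbeats 2000000 in
/-- Core inequality in hyperbola coordinates. -/
lemma core (t s : ℝ) (ht0 : 0 ≤ t) (ht2 : t < 1/2)
    (hs2 : s^2 = 12*t^2 + 1) (hs0 : 0 < s) :
    6*t^2 ≤ (1/2+t)*Real.log (2*s+6*t-1) + (1/2-t)*Real.log (2*s-6*t-1) := by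
  have hs1 : 1 ≤ s := by nlinarith [hs2, sq_nonneg t, hs0]
  have hhalf : (0:ℝ) < 1/2 - t := by linarith
  have hslt2 : s < 2 := by
    nlinarith [hs2, hs0, mul_nonneg ht0 hhalf.le, mul_pos hhalf hhalf]
  have hx : (0:ℝ) ≤ 2*t := by linarith
  have hy : (0:ℝ) < 1 - 2*t := by linarith
  have hapos : (0:ℝ) < 2*s + 6*t - 1 := by linarith
  have hbpos : (0:ℝ) < 2*s - 6*t - 1 := by
    nlinarith [hs2, mul_pos hhalf hhalf, hs0, ht0]
  have hd1 : (0:ℝ) < s + 3*t := by linarith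
  have hd2 : (0:ℝ) < 3 - s := by linarith
  have he2 : (0:ℝ) < 2 - s := by linarith
  -- log b in terms of log (2-s) and log a
  have hbfact : 2*s - 6*t - 1 = (2-s)^2 / (2*s + 6*t - 1) := by
    rw [eq_div_iff hapos.ne']
    linear_combination 3*hs2
  have hlogb : Real.log (2*s - 6*t - 1) = 2*Real.log (2-s) - Real.log (2*s + 6*t - 1) := by
    rw [hbfact, Real.log_div (by positivity) hapos.ne']
    rw [show (2-s)^2 = (2-s)^(2:ℕ) by norm_num, Real.log_pow]
    push_cast
    ring
  rw [hlogb]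
  have hexpand : (1/2+t)*Real.log (2*s+6*t-1)
      + (1/2-t)*(2*Real.log (2-s) - Real.log (2*s+6*t-1))
      = 2*t*Real.log (2*s+6*t-1) + (1-2*t)*Real.log (2-s) := by ring
  rw [hexpand]
  -- the two log lower bounds
  have hv10 : 0 ≤ (s + 3*t - 1)/(s + 3*t) := div_nonneg (by linarith) hd1.le
  have hv11 : (s + 3*t - 1)/(s + 3*t) < 1 := by
    rw [div_lt_one hd1]; linarith
  have hv20 : (1 - s)/(3 - s) ≤ 0 :=
    div_nonpos_of_nonpos_of_nonneg (by linarith) hd2.le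
  have hv21 : -1 < (1 - s)/(3 - s) := by
    rw [neg_lt, ← neg_div, div_lt_one hd2]; linarith
  have hL1 : 2*((s + 3*t - 1)/(s + 3*t) + ((s + 3*t - 1)/(s + 3*t))^3/3
      + ((s + 3*t - 1)/(s + 3*t))^5/5) ≤ Real.log (2*s + 6*t - 1) := by
    have h := log_lb_pos ((s + 3*t - 1)/(s + 3*t)) hv10 hv11
    have e1 : 1 + (s + 3*t - 1)/(s + 3*t) = (2*s+6*t-1)/(s+3*t) := by
      field_simp; ring
    have e2 : 1 - (s + 3*t - 1)/(s + 3*t) = 1/(s+3*t) := by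
      field_simp
      ring
    have hne2 : 1 - (s + 3*t - 1)/(s + 3*t) ≠ 0 := by
      rw [e2]; positivity
    have harg : (1 + (s + 3*t - 1)/(s + 3*t))/(1 - (s + 3*t - 1)/(s + 3*t))
        = 2*s + 6*t - 1 := by
      rw [div_eq_iff hne2, e1, e2]
      field_simp
    rwa [harg] at h
  have hL2 : 2*((1 - s)/(3 - s) + ((1 - s)/(3 - s))^3/3
      + (1-s)^5/(20*(2-s)*(3-s)^3)) ≤ Real.log (2-s) := by
    have h := log_lb_neg ((1 - s)/(3 - s)) hv20 hv21
    have e1 : 1 + (1 - s)/(3 - s) = (4-2*s)/(3-s) := by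
      field_simp; ring
    have e2 : 1 - (1 - s)/(3 - s) = 2/(3-s) := by
      field_simp; ring
    have hne2 : 1 - (1 - s)/(3 - s) ≠ 0 := by
      rw [e2]; positivity
    have harg : (1 + (1 - s)/(3 - s))/(1 - (1 - s)/(3 - s)) = 2 - s := by
      rw [div_eq_iff hne2, e1, e2]
      field_simp [hd2.ne']
      ring
    have htail : ((1 - s)/(3 - s))^5/(5*(1-((1 - s)/(3 - s))^2))
        = (1-s)^5/(20*(2-s)*(3-s)^3) := by
      have hne : (1:ℝ) - ((1 - s)/(3 - s))^2 = 4*(2-s)/(3-s)^2 := by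
        field_simp
        ring
      rw [hne]
      field_simp
      ring
    rw [harg, htail] at h
    exact h
  -- the polynomial inequality
  have hkey : 6*t^2 ≤ 2*t*(2*((s + 3*t - 1)/(s + 3*t) + ((s + 3*t - 1)/(s + 3*t))^3/3
        + ((s + 3*t - 1)/(s + 3*t))^5/5))
      + (1 - 2*t)*(2*((1 - s)/(3 - s) + ((1 - s)/(3 - s))^3/3
        + (1-s)^5/(20*(2-s)*(3-s)^3))) := by
    have hD0 : (0:ℝ) < 60*(s+3*t)^5*(2-s)*(3-s)^3 := by positivity
    have hEq := frac_eq t s hd1 hd2 he2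
    have hfrac : (0:ℝ) ≤ ((2246)*s^5 + (-4990)*s^6 + (3900)*s^7 + (-1340)*s^8 + (190)*s^9 + (-6)*s^10 + (-2592)*t + (16848)*t*s + (-51840)*t*s^2 + (95568)*t*s^3 + (-91398)*t*s^4 + (37650)*t*s^5 + (-2208)*t*s^6 + (-2700)*t*s^7 + (762)*t*s^8 + (-102)*t*s^9 + (12)*t*s^10 + (38880)*t^2 + (-239760)*t^2*s + (654480)*t^2*s^2 + (-948420)*t^2*s^3 + (810720)*t^2*s^4 + (-429300)*t^2*s^5 + (141480)*t^2*s^6 + (-28260)*t^2*s^7 + (3240)*t^2*s^8 + (-180)*t^2*s^9 + (-272160)*t^3 + (1458000)*t^3*s + (-3294540)*t^3*s^2 + (4116420)*t^3*s^3 + (-2991600)*t^3*s^4 + (1311120)*t^3*s^5 + (-353700)*t^3*s^6 + (56700)*t^3*s^7 + (-4320)*t^3*s^8 + (1049760)*t^4 + (-4864050)*t^4*s + (9305010)*t^4*s^2 + (-9236700)*t^4*s^3 + (5321700)*t^4*s^4 + (-1828170)*t^4*s^5 + (350730)*t^4*s^6 + (-29160)*t^4*s^7 + (-2603502)*t^5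 + (9740250)*t^5*s + (-14955840)*t^5*s^2 + (11736900)*t^5*s^3 + (-4940190)*t^5*s^4 + (1062882)*t^5*s^5 + (-92340)*t^5*s^6 + (3737340)*t^6 + (-12691404)*t^6*s + (13938480)*t^6*s^2 + (-6893424)*t^6*s^3 + (1600884)*t^6*s^4 + (-142884)*t^6*s^5 + (-4723920)*t^7 + (7085880)*t^7*s + (-3936600)*t^7*s^2 + (962280)*t^7*s^3 + (-87480)*t^7*s^4) / (60*(s+3*t)^5*(2-s)*(3-s)^3) := by
      rw [npoly_id t s hs2]
      exact div_nonneg (bernAB t s ht0 ht2 hs2 hs0) hD0.le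
    linarith only [hEq, hfrac]
  have hfinal := add_le_add (mul_le_mul_of_nonneg_left hL1 hx)
    (mul_le_mul_of_nonneg_left hL2 hy.le)
  calc 6*t^2 ≤ _ := hkey
  _ ≤ 2*t*Real.log (2*s+6*t-1) + (1-2*t)*Real.log (2-s) := hfinal

lemma dmin_half (w : ℝ) (hw1 : 1/2 ≤ w) (hw2 : w ≤ 1) :
    6 * (1 / 2 - w) ^ 2 ≤ Dmin w := by
  rcases eq_or_lt_of_le hw2 with h1 | h1
  · -- w = 1
    subst h1
    have hs4 : Real.sqrt (12 * ((1:ℝ) - 1 / 2) ^ 2 + 1) = 2 := by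
      rw [show (12 * ((1:ℝ) - 1 / 2) ^ 2 + 1) = 2^2 by norm_num]
      exact Real.sqrt_sq (by norm_num)
    have hw2f : w2fun 1 = 0 := by rw [w2fun, hs4]; norm_num
    have hD : Dmin 1 = Real.log 6 := by
      rw [Dmin, hw2f]; norm_num
    rw [hD]
    have he : Real.exp 1 < 2.7182818286 := Real.exp_one_lt_d9
    have he3 : Real.exp 1 ^ 3 < 2.7182818286^3 := by
      gcongr
    have h32 : Real.exp (3/2 : ℝ) ≤ 6 := by
      have hsq : Real.exp (3/2 : ℝ) ^ 2 = Real.exp 3 := by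
        rw [sq, ← Real.exp_add]; norm_num
      have h3 : Real.exp (3:ℝ) = Real.exp 1 ^ 3 := by
        rw [← Real.exp_nat_mul]; norm_num
      nlinarith [Real.exp_pos (3/2 : ℝ), hsq, h3, he3]
    have hlog := (Real.le_log_iff_exp_le (by norm_num : (0:ℝ) < 6)).2 h32
    nlinarith [hlog]
  · -- 1/2 ≤ w < 1
    have ht0 : 0 ≤ w - 1/2 := by linarith
    have ht2 : w - 1/2 < 1/2 := by linarith
    have hs0 : 0 < Real.sqrt (12 * (w - 1 / 2) ^ 2 + 1) := Real.sqrt_pos.2 (by positivity)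
    have hs2 : Real.sqrt (12 * (w - 1 / 2) ^ 2 + 1)^2 = 12*(w - 1/2)^2 + 1 :=
      Real.sq_sqrt (by positivity)
    have h := core (w - 1/2) (Real.sqrt (12 * (w - 1 / 2) ^ 2 + 1)) ht0 ht2 hs2 hs0
    have hw2f : w2fun w = (2 - Real.sqrt (12 * (w - 1 / 2) ^ 2 + 1))/3 := rfl
    have harga : 6 * (w - w2fun w)
        = 2*Real.sqrt (12 * (w - 1 / 2) ^ 2 + 1) + 6*(w - 1/2) - 1 := by
      rw [hw2f]; ring
    have hargb : 6 * (1 - w - w2fun w)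
        = 2*Real.sqrt (12 * (w - 1 / 2) ^ 2 + 1) - 6*(w - 1/2) - 1 := by
      rw [hw2f]; ring
    have hD : Dmin w = (1/2+(w - 1/2)) * Real.log (2*Real.sqrt (12 * (w - 1 / 2) ^ 2 + 1)
          + 6*(w - 1/2) - 1)
        + (1/2-(w - 1/2)) * Real.log (2*Real.sqrt (12 * (w - 1 / 2) ^ 2 + 1)
          - 6*(w - 1/2) - 1) := by
      rw [Dmin, harga, hargb]; ring
    have h6 : 6 * (1 / 2 - w) ^ 2 = 6*(w - 1/2)^2 := by ring
    rw [hD, h6]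
    exact h

theorem stmt_9 (w₁ : ℝ) (hw : w₁ ∈ Set.Icc (0 : ℝ) 1) :
    6 * (1 / 2 - w₁) ^ 2 ≤ Dmin w₁ := by
  obtain ⟨hw0, hw1⟩ := hw
  rcases le_or_gt (1/2 : ℝ) w₁ with h | h
  · exact dmin_half w₁ h hw1
  · have hsym : w2fun (1 - w₁) = w2fun w₁ := by
      have e : 12 * (1 - w₁ - 1/2)^2 + 1 = 12 * (w₁ - 1/2)^2 + 1 := by ring
      rw [w2fun, w2fun, e]
    have hDsym : Dmin (1 - w₁) = Dmin w₁ := by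
      rw [Dmin, Dmin, hsym]
      rw [show 6 * (1 - (1 - w₁) - w2fun w₁) = 6 * (w₁ - w2fun w₁) by ring]
      rw [show (6 : ℝ) * (1 - w₁ - w2fun w₁) = 6 * (1 - w₁ - w2fun w₁) from rfl]
      ring
    have h2 := dmin_half (1 - w₁) (by linarith) (by linarith)
    rw [hDsym] at h2
    calc 6 * (1 / 2 - w₁) ^ 2 = 6 * (1/2 - (1 - w₁))^2 := by ring
    _ ≤ Dmin w₁ := h2
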